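/- Painlevé–Kuratowski convergence (Theorem 3): under the assumptions that n_xy^(m) is eventually equal to n_xy for each x ≠ y and δ^(m)·n_x^(m) → d_x > 0, the sequence of sets 𝒬_s^(m) := {(T−I)/δ^(m) : T(x,y)=(s·A(x,y)+n_xy^(m))/(s+n_x^(m)), A ∈ int(𝕋)} converges in the Painlevé–Kuratowski sense to 𝒬_s := {Q : Q(x,y)=(s·A(x,y)+n_xy)/d_x for x≠y, rows sum to zero, A ∈ 𝕋}; i.e., liminf_m 𝒬_s^(m) = limsup_m 𝒬_s^(m) = 𝒬_s. -/

import Mathlib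

open Finset Filter

lemma lemA (tmax s : ℝ) (nr : ℕ → ℕ) (dx : ℝ)
    (hdn : Tendsto (fun m : ℕ => (tmax / m) * (nr m : ℝ)) atTop (nhds dx)) :
    Tendsto (fun m : ℕ => (s + (nr m : ℝ)) * (tmax / m)) atTop (nhds dx) := by
  have h0 : Tendsto (fun m : ℕ => tmax / (m : ℝ)) atTop (nhds 0) :=
    tendsto_const_div_atTop_nhds_zero_nat tmax
  have := (h0.const_mul s).add hdn
  simp only [mul_zero, zero_add] at this
  refine this.congr fun m => by ring

lemma lemB (tmax s : ℝ) (nr : ℕ → ℕ) (nd : ℕ → ℕ) (f : ℕ → ℝ) (a nxy dx : ℝ)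
    (hdn : Tendsto (fun m : ℕ => (tmax / m) * (nr m : ℝ)) atTop (nhds dx))
    (hf : Tendsto f atTop (nhds a))
    (hnd : ∀ᶠ m in atTop, (nd m : ℝ) = nxy) (hdx : 0 < dx) :
    Tendsto (fun m : ℕ => (s * f m + (nd m : ℝ)) / (s + (nr m : ℝ)) / (tmax / m))
      atTop (nhds ((s * a + nxy) / dx)) := by
  simp only [div_div]
  have hndt : Tendsto (fun m : ℕ => (nd m : ℝ)) atTop (nhds nxy) :=
    Tendsto.congr' (hnd.mono fun m h => h.symm) tendsto_const_nhds
  exact ((hf.const_mul s).add hndt).div (lemA tmax s nr dx hdn) hdx.ne'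

lemma rowzero (S : Type*) [Fintype S] [DecidableEq S] (s δ den : ℝ) (hden : den ≠ 0)
    (a nd : S → ℝ) (hsa : ∑ y, a y = 1) (hnd : ∑ y, nd y + s = den) (x : S)
    (g : S → ℝ)
    (hg : ∀ y, g y = ((s * a y + nd y) / den - if x = y then (1:ℝ) else 0) / δ) :
    g x = -∑ z ∈ Finset.univ.erase x, g z := by
  have hσ : ∑ y, g y = 0 := by
    simp only [hg]
    rw [← Finset.sum_div, Finset.sum_sub_distrib, ← Finset.sum_div,
      Finset.sum_add_distrib, ← Finset.mul_sum, hsa]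
    have h1 : ∑ y, (if x = y then (1:ℝ) else 0) = 1 := by simp
    rw [h1]
    have : s * 1 + ∑ y, nd y = den := by linarith
    rw [this, div_self hden]
    simp
  have := Finset.add_sum_erase Finset.univ g (Finset.mem_univ x)
  rw [hσ] at this
  linarith



open Finset Filter

/-- Theorem 3, Painlevé–Kuratowski convergence: the sets `𝒬ₛ⁽ᵐ⁾`
converge to `𝒬ₛ`: every `Q ∈ 𝒬ₛ` is a limit of a sequence with `Q_m ∈ 𝒬ₛ⁽ᵐ⁾`,
and every accumulation point of such a sequence lies in `𝒬ₛ`; here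
`𝒬ₛ⁽ᵐ⁾ = {(T−I)/δ⁽ᵐ⁾ : T(x,y) = (s·A(x,y)+n_xy⁽ᵐ⁾)/(s+n_x⁽ᵐ⁾), A ∈ int(𝕋)}`
and `𝒬ₛ = {Q_A : A ∈ 𝕋}`, assuming the off-diagonal counts `n_xy⁽ᵐ⁾` are
eventually equal to `n_xy` and `δ⁽ᵐ⁾·n_x⁽ᵐ⁾ → d_x > 0` with `δ⁽ᵐ⁾ = tmax/m`. -/
theorem stmt_14 (S : Type*) [Fintype S] [DecidableEq S]
    (tmax : ℝ) (htmax : 0 < tmax) (s : ℝ) (hs : 0 ≤ s)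
    (ndisc : ℕ → S → S → ℕ)
    (nrow : ℕ → S → ℕ) (hnrow : ∀ m x, nrow m x = ∑ y, ndisc m x y)
    (n : S → S → ℝ)
    (hn : ∀ x y, x ≠ y → ∀ᶠ m in atTop, (ndisc m x y : ℝ) = n x y)
    (d : S → ℝ) (hd : ∀ x, 0 < d x)
    (hdn : ∀ x, Tendsto (fun m : ℕ => (tmax / m) * (nrow m x : ℝ)) atTop (nhds (d x)))
    (Qs : Set (Matrix S S ℝ))
    (hQs : Qs = {Q | ∃ A : Matrix S S ℝ,
      (∀ x y, 0 ≤ A x y) ∧ (∀ x, ∑ y, A x y = 1) ∧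
      (∀ x y, Q x y =
        if x = y then -∑ z ∈ Finset.univ.erase x, (s * A x z + n x z) / d x
        else (s * A x y + n x y) / d x)})
    (Qsm : ℕ → Set (Matrix S S ℝ))
    (hQsm : ∀ m, Qsm m = {Q | ∃ A : Matrix S S ℝ,
      (∀ x y, 0 < A x y) ∧ (∀ x, ∑ y, A x y = 1) ∧
      (∀ x y, Q x y =
        ((s * A x y + (ndisc m x y : ℝ)) / (s + (nrow m x : ℝ))
          - (if x = y then (1 : ℝ) else 0)) / (tmax / m))}) :
    (∀ Q ∈ Qs, ∃ Qseq : ℕ → Matrix S S ℝ,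
      (∀ m : ℕ, 0 < m → Qseq m ∈ Qsm m) ∧
      Tendsto Qseq atTop (nhds Q)) ∧
    (∀ Qseq : ℕ → Matrix S S ℝ,
      (∀ m : ℕ, 0 < m → Qseq m ∈ Qsm m) →
      ∀ (φ : ℕ → ℕ), StrictMono φ →
      ∀ Qlim : Matrix S S ℝ,
        Tendsto (fun k => Qseq (φ k)) atTop (nhds Qlim) → Qlim ∈ Qs) := by
  constructor
  · -- eventual nonvanishing of the denominator
    have E : ∀ x : S, ∀ᶠ m in atTop, s + (nrow m x : ℝ) ≠ 0 := by
      intro x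
      have h := (lemA tmax s (fun m => nrow m x) (d x) (hdn x)).eventually
        (lt_mem_nhds (hd x))
      exact h.mono fun m hm h0 => by rw [h0, zero_mul] at hm; exact lt_irrefl 0 hm
    intro Q hQ
    rw [hQs] at hQ
    obtain ⟨A, hA0, hA1, hAQ⟩ := hQ
    set c : ℝ := (Fintype.card S : ℝ) with hc
    set Am : ℕ → Matrix S S ℝ :=
      fun m => Matrix.of fun x y => (1 - 1/((m:ℝ)+1)) * A x y + (1/((m:ℝ)+1)) / c with hAmdef
    have hcpos : ∀ _x : S, (0:ℝ) < c := fun x => by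
      have : Nonempty S := ⟨x⟩
      rw [hc]
      exact_mod_cast Fintype.card_pos
    have hεpos : ∀ m : ℕ, 0 < 1/((m:ℝ)+1) := fun m => by positivity
    have hεle : ∀ m : ℕ, 1/((m:ℝ)+1) ≤ 1 := fun m => by
      rw [div_le_one (by positivity)]; linarith [Nat.cast_nonneg (α := ℝ) m]
    have hAm0 : ∀ m x y, 0 < Am m x y := by
      intro m x y
      have h1 : 0 ≤ (1 - 1/((m:ℝ)+1)) * A x y :=
        mul_nonneg (by linarith [hεle m]) (hA0 x y)
      have h2 : 0 < (1/((m:ℝ)+1)) / c := div_pos (hεpos m) (hcpos x)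
      show 0 < (1 - 1/((m:ℝ)+1)) * A x y + (1/((m:ℝ)+1)) / c
      linarith
    have hAm1 : ∀ m x, ∑ y, Am m x y = 1 := by
      intro m x
      have hcne : c ≠ 0 := (hcpos x).ne'
      simp only [Am, Matrix.of_apply, Finset.sum_add_distrib, ← Finset.mul_sum, hA1 x,
        Finset.sum_const, nsmul_eq_mul, Finset.card_univ, ← hc]
      field_simp
      ring
    set Qseq : ℕ → Matrix S S ℝ := fun m => Matrix.of fun x y =>
      ((s * Am m x y + (ndisc m x y : ℝ)) / (s + (nrow m x : ℝ))
        - (if x = y then (1:ℝ) else 0)) / (tmax / m) with hQseqdef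
    refine ⟨Qseq, fun m _hm => ?_, ?_⟩
    · rw [hQsm]
      exact ⟨Am m, hAm0 m, hAm1 m, fun x y => rfl⟩
    · -- convergence of A entries
      have hε0 : Tendsto (fun m : ℕ => 1/((m:ℝ)+1)) atTop (nhds 0) :=
        tendsto_one_div_add_atTop_nhds_zero_nat
      have hAmlim : ∀ x y, Tendsto (fun m => Am m x y) atTop (nhds (A x y)) := by
        intro x y
        have h1 : Tendsto (fun m : ℕ => (1 - 1/((m:ℝ)+1)) * A x y + (1/((m:ℝ)+1))/c)
            atTop (nhds ((1-0) * A x y + 0/c)) :=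
          ((tendsto_const_nhds.sub hε0).mul tendsto_const_nhds).add (hε0.div_const c)
        simpa [Am] using h1
      have hoff : ∀ x y, x ≠ y →
          Tendsto (fun m => Qseq m x y) atTop (nhds ((s * A x y + n x y) / d x)) := by
        intro x y hxy
        have := lemB tmax s (fun m => nrow m x) (fun m => ndisc m x y)
          (fun m => Am m x y) (A x y) (n x y) (d x) (hdn x) (hAmlim x y) (hn x y hxy) (hd x)
        simpa [Qseq, if_neg hxy] using this
      refine tendsto_pi_nhds.mpr fun x => tendsto_pi_nhds.mpr fun y => ?_
      by_cases hxy : x = y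
      · subst hxy
        have hdiagEq : ∀ᶠ m in atTop, Qseq m x x = -∑ z ∈ Finset.univ.erase x, Qseq m x z := by
          refine (E x).mono fun m hm => ?_
          refine rowzero S s (tmax/m) (s + (nrow m x : ℝ)) hm (fun y => Am m x y)
            (fun y => (ndisc m x y : ℝ)) (hAm1 m x) ?_ x (fun y => Qseq m x y)
            (fun y => rfl)
          rw [hnrow m x]; push_cast; ring
        have hlim : Tendsto (fun m => -∑ z ∈ Finset.univ.erase x, Qseq m x z) atTop
            (nhds (-∑ z ∈ Finset.univ.erase x, (s * A x z + n x z) / d x)) := by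
          refine (tendsto_finset_sum _ fun z hz => ?_).neg
          exact hoff x z (Ne.symm (Finset.mem_erase.mp hz).1)
        rw [hAQ x x, if_pos rfl]
        exact Tendsto.congr' (hdiagEq.mono fun m hm => hm.symm) hlim
      · rw [hAQ x y, if_neg hxy]
        exact hoff x y hxy
  
  · intro Qseq hmem φ hφ Qlim hconv
    rw [hQs]
    -- choose witnesses
    have hch : ∀ m : ℕ, ∃ A : Matrix S S ℝ, 0 < m →
        (∀ x y, 0 < A x y) ∧ (∀ x, ∑ y, A x y = 1) ∧
        (∀ x y, Qseq m x y =
          ((s * A x y + (ndisc m x y : ℝ)) / (s + (nrow m x : ℝ))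
            - (if x = y then (1 : ℝ) else 0)) / (tmax / m)) := by
      intro m
      by_cases hm : 0 < m
      · have h := hmem m hm
        rw [hQsm] at h
        obtain ⟨A, hA⟩ := h
        exact ⟨A, fun _ => hA⟩
      · exact ⟨1, fun h => absurd h hm⟩
    choose Am hAm using hch
    have hφtop : Tendsto φ atTop atTop := hφ.tendsto_atTop
    have hφ1 : ∀ᶠ k in atTop, 0 < φ k := hφtop.eventually (eventually_gt_atTop 0)
    have hQe : ∀ x y, Tendsto (fun k => Qseq (φ k) x y) atTop (nhds (Qlim x y)) := by
      intro x y
      have h1 := tendsto_pi_nhds.mp hconv x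
      exact tendsto_pi_nhds.mp h1 y
    have hden : ∀ x, Tendsto (fun k => (s + (nrow (φ k) x : ℝ)) * (tmax / (φ k))) atTop
        (nhds (d x)) := fun x => (lemA tmax s (fun m => nrow m x) (d x) (hdn x)).comp hφtop
    have hdenpos : ∀ x, ∀ᶠ k in atTop,
        0 < (s + (nrow (φ k) x : ℝ)) * (tmax / (φ k)) :=
      fun x => (hden x).eventually (lt_mem_nhds (hd x))
    -- key limit : s * Am (φ k) x y → Qlim x y * d x - n x y for x ≠ y
    have hsA : ∀ x y, x ≠ y → Tendsto (fun k => s * Am (φ k) x y) atTop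
        (nhds (Qlim x y * d x - n x y)) := by
      intro x y hxy
      have hmain : Tendsto
          (fun k => Qseq (φ k) x y * ((s + (nrow (φ k) x : ℝ)) * (tmax / (φ k))) - n x y)
          atTop (nhds (Qlim x y * d x - n x y)) :=
        ((hQe x y).mul (hden x)).sub tendsto_const_nhds
      refine hmain.congr' ?_
      filter_upwards [hφ1, hdenpos x, hφtop.eventually (hn x y hxy)] with k hk hv hnd
      have hvne : (s + (nrow (φ k) x : ℝ)) * (tmax / (φ k)) ≠ 0 := ne_of_gt hv
      have hform := (hAm (φ k) hk).2.2 x y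
      rw [if_neg hxy, sub_zero, div_div] at hform
      rw [hform, div_mul_cancel₀ _ hvne, hnd]
      ring
    set B : Matrix S S ℝ := Matrix.of fun x y =>
      if x = y then 1 - ∑ z ∈ Finset.univ.erase x, (Qlim x z * d x - n x z) / s
      else (Qlim x y * d x - n x y) / s with hB
    have hBoff : ∀ x y, x ≠ y → B x y = (Qlim x y * d x - n x y) / s :=
      fun x y hxy => by simp [B, if_neg hxy]
    have hc0 : ∀ x y, x ≠ y → 0 ≤ Qlim x y * d x - n x y := by
      intro x y hxy
      refine ge_of_tendsto (hsA x y hxy) ?_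
      filter_upwards [hφ1] with k hk
      exact mul_nonneg hs ((hAm (φ k) hk).1 x y).le
    have hkey : ∀ x y, x ≠ y → s * B x y + n x y = Qlim x y * d x := by
      intro x y hxy
      rw [hBoff x y hxy]
      rcases eq_or_lt_of_le hs with hs0 | hs0
      · have h0 : Tendsto (fun _ : ℕ => (0:ℝ)) atTop (nhds (Qlim x y * d x - n x y)) := by
          refine (hsA x y hxy).congr fun k => ?_
          rw [← hs0, zero_mul]
        have := tendsto_nhds_unique tendsto_const_nhds h0
        rw [← hs0]
        linarith
      · field_simp; ring
    have hsumle : ∀ x, ∑ z ∈ Finset.univ.erase x, (Qlim x z * d x - n x z) / s ≤ 1 := by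
      intro x
      rcases eq_or_lt_of_le hs with hs0 | hs0
      · have : ∀ z ∈ Finset.univ.erase x, (Qlim x z * d x - n x z) / s = 0 := by
          intro z _; rw [← hs0, div_zero]
        rw [Finset.sum_congr rfl this]
        simp
      · -- s * Σ ≤ s via limits
        have hlim : Tendsto (fun k => ∑ z ∈ Finset.univ.erase x, s * Am (φ k) x z) atTop
            (nhds (∑ z ∈ Finset.univ.erase x, (Qlim x z * d x - n x z))) := by
          refine tendsto_finset_sum _ fun z hz => ?_
          exact hsA x z (Ne.symm (Finset.mem_erase.mp hz).1)
        have hle : ∑ z ∈ Finset.univ.erase x, (Qlim x z * d x - n x z) ≤ s := by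
          refine le_of_tendsto hlim ?_
          filter_upwards [hφ1] with k hk
          rw [← Finset.mul_sum]
          have h1 : ∑ z ∈ Finset.univ.erase x, Am (φ k) x z ≤ 1 := by
            rw [← (hAm (φ k) hk).2.1 x]
            exact Finset.sum_le_sum_of_subset_of_nonneg (Finset.subset_univ _)
              (fun z _ _ => ((hAm (φ k) hk).1 x z).le)
          nlinarith
        rw [← Finset.sum_div, div_le_one hs0]
        exact hle
    have hBpos : ∀ x y, 0 ≤ B x y := by
      intro x y
      by_cases hxy : x = y
      · subst hxy
        have := hsumle x
        simp only [B, Matrix.of_apply, if_true, eq_self_iff_true]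
        linarith
      · rw [hBoff x y hxy]
        exact div_nonneg (hc0 x y hxy) hs
    have hBrow : ∀ x, ∑ y, B x y = 1 := by
      intro x
      rw [← Finset.add_sum_erase Finset.univ _ (Finset.mem_univ x)]
      have h1 : ∑ z ∈ Finset.univ.erase x, B x z
          = ∑ z ∈ Finset.univ.erase x, (Qlim x z * d x - n x z) / s := by
        refine Finset.sum_congr rfl fun z hz => ?_
        exact hBoff x z (Ne.symm (Finset.mem_erase.mp hz).1)
      rw [h1]
      simp only [B, Matrix.of_apply, if_true, eq_self_iff_true]
      ring
    have hoffQ : ∀ x y, x ≠ y → Qlim x y = (s * B x y + n x y) / d x := by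
      intro x y hxy
      rw [hkey x y hxy, mul_div_assoc, div_self (hd x).ne', mul_one]
    -- diagonal
    have hdiagQ : ∀ x, Qlim x x = -∑ z ∈ Finset.univ.erase x, Qlim x z := by
      intro x
      have hEx : ∀ᶠ k in atTop, s + (nrow (φ k) x : ℝ) ≠ 0 := by
        filter_upwards [hdenpos x] with k hk h0
        rw [h0, zero_mul] at hk
        exact lt_irrefl 0 hk
      have hEq : ∀ᶠ k in atTop,
          Qseq (φ k) x x = -∑ z ∈ Finset.univ.erase x, Qseq (φ k) x z := by
        filter_upwards [hφ1, hEx] with k hk hne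
        refine rowzero S s (tmax / (φ k)) (s + (nrow (φ k) x : ℝ)) hne
          (fun y => Am (φ k) x y) (fun y => (ndisc (φ k) x y : ℝ))
          ((hAm (φ k) hk).2.1 x) ?_ x (fun y => Qseq (φ k) x y)
          (fun y => (hAm (φ k) hk).2.2 x y)
        rw [hnrow (φ k) x]; push_cast; ring
      have hlim2 : Tendsto (fun k => -∑ z ∈ Finset.univ.erase x, Qseq (φ k) x z) atTop
          (nhds (-∑ z ∈ Finset.univ.erase x, Qlim x z)) :=
        (tendsto_finset_sum _ fun z _ => hQe x z).neg
      exact tendsto_nhds_unique ((hQe x x).congr' hEq) hlim2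
    refine ⟨B, hBpos, hBrow, fun x y => ?_⟩
    by_cases hxy : x = y
    · subst hxy
      rw [if_pos rfl, hdiagQ x]
      congr 1
      refine Finset.sum_congr rfl fun z hz => ?_
      exact hoffQ x z (Ne.symm (Finset.mem_erase.mp hz).1)
    · rw [if_neg hxy]
      exact hoffQ x y hxy
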